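/- arXiv:2201.06503 — 2 statements merged into one kernel-verified Lean document; each statement's English description precedes it below -/
import Mathlib

section
/- Suppose q(x_{0:N}) is a joint probability density on (ℝ^d)^{N+1} and p(x_{0:N}) = p(x_N) ∏_{n=1}^N p(x_{n−1} | xₙ) is a Markov chain (in the reverse direction). Then E_q[D_KL(q(x_{0:N−1} | x_N) ‖ p(x_{0:N−1} | x_N))] = ∑_{n=1}^N E_q[D_KL(q(x_{n−1} | xₙ) ‖ p(x_{n−1} | xₙ))] + c, where c = ∑_{n=1}^N E_q[H(q(x_{n−1} | xₙ))] − E_q[H(q(x_{0:N−1} | x_N))] depends only on q. In particular, if q(x_{0:N}) is itself a Markov chain, then c = 0. -/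
open MeasureTheory Finset

noncomputable def marg {N d : ℕ} (Q : (Fin (N + 1) → Fin d → ℝ) → ℝ)
    (s : Finset (Fin (N + 1))) (x : Fin (N + 1) → Fin d → ℝ) : ℝ :=
  ∫ y : {i : Fin (N + 1) // i ∉ s} → (Fin d → ℝ),
    Q (fun i => if h : i ∈ s then x i else y ⟨i, h⟩)

lemma marg_univ {N d : ℕ} (Q : (Fin (N + 1) → Fin d → ℝ) → ℝ)
    (x : Fin (N + 1) → Fin d → ℝ) : marg Q Finset.univ x = Q x := by
  haveI : IsEmpty {i : Fin (N + 1) // i ∉ (Finset.univ : Finset (Fin (N + 1)))} :=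
    ⟨fun i => i.2 (Finset.mem_univ i.1)⟩
  unfold marg
  have h1 : ∀ y : {i : Fin (N + 1) // i ∉ (Finset.univ : Finset (Fin (N + 1)))} → (Fin d → ℝ),
      (fun i => if h : i ∈ (Finset.univ : Finset (Fin (N + 1))) then x i else y ⟨i, h⟩) = x := by
    intro y; funext i; simp
  simp only [h1]
  have h2 : (volume : Measure ({i : Fin (N + 1) // i ∉ (Finset.univ : Finset (Fin (N + 1)))}
      → Fin d → ℝ)) = Measure.dirac isEmptyElim := by
    rw [MeasureTheory.volume_pi, Measure.pi_of_empty]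
  rw [h2, integral_dirac]

/-- let `Q` be a joint density on `(ℝ^d)^{N+1}` and let
`p(x_{0:N}) = p(x_N) ∏ₙ p(x_{n−1}|xₙ)` be a (reverse) Markov chain with transition densities
`P n xₙ x_{n−1}`.  Then
`E_q[D_KL(q(x_{0:N−1}|x_N) ‖ p(x_{0:N−1}|x_N))]
  = ∑ₙ E_q[D_KL(q(x_{n−1}|xₙ) ‖ p(x_{n−1}|xₙ))] + c`
with `c = ∑ₙ E_q[H(q(x_{n−1}|xₙ))] − E_q[H(q(x_{0:N−1}|x_N))]`, and if `Q` is itself a Markov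
chain then `c = 0`. -/
theorem stmt_7 {N d : ℕ} (Q : (Fin (N + 1) → Fin d → ℝ) → ℝ)
    (P : Fin N → (Fin d → ℝ) → (Fin d → ℝ) → ℝ)
    (hP_pos : ∀ n v u, 0 < P n v u)
    (hpos : ∀ (s : Finset (Fin (N + 1))) (x : Fin (N + 1) → Fin d → ℝ), 0 < marg Q s x)
    (hint_cond : Integrable (fun x => Q x * Real.log (Q x / marg Q {Fin.last N} x)))
    (hint_pair : ∀ n : Fin N, Integrable (fun x =>
      Q x * Real.log (marg Q {n.castSucc, n.succ} x / marg Q {n.succ} x)))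
    (hint_P : ∀ n : Fin N, Integrable (fun x =>
      Q x * Real.log (P n (x n.succ) (x n.castSucc)))) :
    ((∫ x, Q x * Real.log ((Q x / marg Q {Fin.last N} x)
          / ∏ n : Fin N, P n (x n.succ) (x n.castSucc)))
      = (∑ n : Fin N, ∫ x, Q x * Real.log
            ((marg Q {n.castSucc, n.succ} x / marg Q {n.succ} x)
              / P n (x n.succ) (x n.castSucc)))
        + ((∑ n : Fin N,
              - ∫ x, Q x * Real.log (marg Q {n.castSucc, n.succ} x / marg Q {n.succ} x))
            - (- ∫ x, Q x * Real.log (Q x / marg Q {Fin.last N} x)))) ∧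
    ((∀ x, Q x = marg Q {Fin.last N} x *
        ∏ n : Fin N, marg Q {n.castSucc, n.succ} x / marg Q {n.succ} x) →
      (∑ n : Fin N,
          - ∫ x, Q x * Real.log (marg Q {n.castSucc, n.succ} x / marg Q {n.succ} x))
        - (- ∫ x, Q x * Real.log (Q x / marg Q {Fin.last N} x)) = 0) := by
  have hQ : ∀ x, 0 < Q x := fun x => by
    have h := hpos Finset.univ x
    rwa [marg_univ] at h
  have key1 : (∫ x, Q x * Real.log ((Q x / marg Q {Fin.last N} x)
          / ∏ n : Fin N, P n (x n.succ) (x n.castSucc)))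
      = (∫ x, Q x * Real.log (Q x / marg Q {Fin.last N} x))
        - ∑ n : Fin N, ∫ x, Q x * Real.log (P n (x n.succ) (x n.castSucc)) := by
    have hpt : ∀ x, Q x * Real.log ((Q x / marg Q {Fin.last N} x)
          / ∏ n : Fin N, P n (x n.succ) (x n.castSucc))
        = Q x * Real.log (Q x / marg Q {Fin.last N} x)
          - ∑ n : Fin N, Q x * Real.log (P n (x n.succ) (x n.castSucc)) := by
      intro x
      rw [Real.log_div (div_pos (hQ x) (hpos _ x)).ne'
          (Finset.prod_pos (fun n _ => hP_pos n _ _)).ne',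
        Real.log_prod (fun n _ => (hP_pos n _ _).ne'), mul_sub, Finset.mul_sum]
    simp only [hpt]
    rw [integral_sub hint_cond (integrable_finset_sum _ (fun n _ => hint_P n)),
      integral_finset_sum _ (fun n _ => hint_P n)]
  have key2 : ∀ n : Fin N,
      (∫ x, Q x * Real.log ((marg Q {n.castSucc, n.succ} x / marg Q {n.succ} x)
          / P n (x n.succ) (x n.castSucc)))
      = (∫ x, Q x * Real.log (marg Q {n.castSucc, n.succ} x / marg Q {n.succ} x))
        - ∫ x, Q x * Real.log (P n (x n.succ) (x n.castSucc)) := by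
    intro n
    have hpt : ∀ x, Q x * Real.log ((marg Q {n.castSucc, n.succ} x / marg Q {n.succ} x)
          / P n (x n.succ) (x n.castSucc))
        = Q x * Real.log (marg Q {n.castSucc, n.succ} x / marg Q {n.succ} x)
          - Q x * Real.log (P n (x n.succ) (x n.castSucc)) := by
      intro x
      rw [Real.log_div (div_pos (hpos _ x) (hpos _ x)).ne' (hP_pos n _ _).ne', mul_sub]
    simp only [hpt]
    exact integral_sub (hint_pair n) (hint_P n)
  constructor
  · rw [key1]
    simp only [key2]
    rw [Finset.sum_sub_distrib, Finset.sum_neg_distrib]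
    abel
  · intro hmc
    have hQeq : ∀ x, Q x * Real.log (Q x / marg Q {Fin.last N} x)
        = ∑ n : Fin N,
            Q x * Real.log (marg Q {n.castSucc, n.succ} x / marg Q {n.succ} x) := by
      intro x
      have hratio : Q x / marg Q {Fin.last N} x
          = ∏ n : Fin N, marg Q {n.castSucc, n.succ} x / marg Q {n.succ} x := by
        rw [hmc x, mul_div_assoc, mul_comm, div_mul_cancel₀ _ (hpos _ x).ne']
      rw [hratio, Real.log_prod
          (fun n _ => (div_pos (hpos _ x) (hpos _ x)).ne'), Finset.mul_sum]
    have hint : (∫ x, Q x * Real.log (Q x / marg Q {Fin.last N} x))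
        = ∑ n : Fin N, ∫ x,
            Q x * Real.log (marg Q {n.castSucc, n.succ} x / marg Q {n.succ} x) := by
      simp only [hQeq]
      rw [integral_finset_sum _ (fun n _ => hint_pair n)]
    rw [hint, Finset.sum_neg_distrib]
    abel
end

section
/- For the generalized forward process, the optimal reverse variance σₙ*² satisfies the bounds λₙ² ≤ σₙ*² ≤ λₙ² + (√(β̄ₙ/αₙ) − √(β̄_{n−1} − λₙ²))². If furthermore the data distribution q(x₀) is supported in the cube [a, b]^d, then also σₙ*² ≤ λₙ² + (√ᾱ_{n−1} − √(β̄_{n−1} − λₙ²) · √(ᾱₙ/β̄ₙ))² · ((b − a)/2)². -/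
open MeasureTheory Finset

/-- Isotropic Gaussian density `N(μ, s·I)` on `ℝ^d`. -/
noncomputable def gaussIso (d : ℕ) (μ : Fin d → ℝ) (s : ℝ) (x : Fin d → ℝ) : ℝ :=
  (2 * Real.pi * s) ^ (-(d : ℝ) / 2) * Real.exp (-(∑ i, (x i - μ i) ^ 2) / (2 * s))

/-- `ᾱₙ = ∏_{i=1}^n (1 − βᵢ)`. -/
noncomputable def alphaBar (β : ℕ → ℝ) (n : ℕ) : ℝ := ∏ i ∈ Finset.Icc 1 n, (1 - β i)

/-- `β̄ₙ = 1 − ᾱₙ`. -/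
noncomputable def betaBar (β : ℕ → ℝ) (n : ℕ) : ℝ := 1 - alphaBar β n

/-- Joint density of `(x₀, xₙ)`, using the marginal `q(xₙ|x₀) = N(√ᾱₙ x₀, β̄ₙ I)`. -/
noncomputable def joint0n (d : ℕ) (β : ℕ → ℝ) (q0 : (Fin d → ℝ) → ℝ) (n : ℕ)
    (x0 xn : Fin d → ℝ) : ℝ :=
  q0 x0 * gaussIso d (fun i => Real.sqrt (alphaBar β n) * x0 i) (betaBar β n) xn

/-- Marginal density `qₙ(xₙ)`. -/
noncomputable def margN (d : ℕ) (β : ℕ → ℝ) (q0 : (Fin d → ℝ) → ℝ) (n : ℕ)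
    (xn : Fin d → ℝ) : ℝ :=
  ∫ x0, joint0n d β q0 n x0 xn

/-- Conditional mean `E_{q(x₀|xₙ)}[x₀]`. -/
noncomputable def condMean0 (d : ℕ) (β : ℕ → ℝ) (q0 : (Fin d → ℝ) → ℝ) (n : ℕ)
    (xn : Fin d → ℝ) : Fin d → ℝ :=
  fun i => (∫ x0, joint0n d β q0 n x0 xn * x0 i) / margN d β q0 n xn

/-- `E_{qₙ(xₙ)}[tr(Cov_{q(x₀|xₙ)}[x₀])]`. -/
noncomputable def EtrCov (d : ℕ) (β : ℕ → ℝ) (q0 : (Fin d → ℝ) → ℝ) (n : ℕ) : ℝ :=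
  ∫ xn, ∫ x0, joint0n d β q0 n x0 xn * ∑ i, (x0 i - condMean0 d β q0 n xn i) ^ 2

/-- The optimal reverse variance
`σₙ*² = λₙ² + (√ᾱ_{n−1} − √(β̄_{n−1} − λₙ²)·√(ᾱₙ/β̄ₙ))² E_{qₙ}[tr Cov_{q(x₀|xₙ)}[x₀]/d]`. -/
noncomputable def sigmaStar2 (d : ℕ) (β lam : ℕ → ℝ) (q0 : (Fin d → ℝ) → ℝ) (n : ℕ) : ℝ :=
  lam n ^ 2 +
    (Real.sqrt (alphaBar β (n - 1)) -
        Real.sqrt (betaBar β (n - 1) - lam n ^ 2) *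
          Real.sqrt (alphaBar β n / betaBar β n)) ^ 2 *
      (EtrCov d β q0 n / d)

open Real Filter

lemma tendsto_mul_exp_neg_sq {b : ℝ} (hb : 0 < b) :
    Tendsto (fun x : ℝ => x * Real.exp (-b * x ^ 2)) atTop (nhds 0) := by
  have h1 : Tendsto (fun y : ℝ => (1 / b) * (y * Real.exp (-y))) atTop (nhds 0) := by
    have := (tendsto_pow_mul_exp_neg_atTop_nhds_zero 1).const_mul (1 / b)
    simpa using this
  have h2 : Tendsto (fun x : ℝ => b * x) atTop atTop :=
    tendsto_id.const_mul_atTop hb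
  have h3 := h1.comp h2
  apply squeeze_zero_norm' _ h3
  filter_upwards [eventually_ge_atTop (1 : ℝ)] with x hx
  have hx0 : (0:ℝ) ≤ x := by linarith
  simp only [Function.comp_apply, Real.norm_eq_abs]
  rw [abs_of_nonneg (by positivity)]
  have : Real.exp (-b * x ^ 2) ≤ Real.exp (-(b * x)) := by
    apply Real.exp_le_exp.2
    nlinarith [mul_nonneg (mul_nonneg hb.le hx0) (sub_nonneg.2 hx)]
  calc x * Real.exp (-b * x ^ 2) ≤ x * Real.exp (-(b * x)) := by
        apply mul_le_mul_of_nonneg_left this hx0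
    _ = 1 / b * (b * x * Real.exp (-(b * x))) := by field_simp

lemma integrable_sq_mul_exp_neg_sq {b : ℝ} (hb : 0 < b) :
    Integrable (fun x : ℝ => x ^ 2 * Real.exp (-b * x ^ 2)) := by
  have := integrable_rpow_mul_exp_neg_mul_sq hb (s := 2) (by norm_num)
  refine this.congr (Filter.Eventually.of_forall fun x => ?_)
  simp only
  rw [show (2:ℝ) = ((2:ℕ):ℝ) by norm_num, Real.rpow_natCast]

lemma integral_sq_mul_exp_neg_sq {b : ℝ} (hb : 0 < b) :
    ∫ x : ℝ, x ^ 2 * Real.exp (-b * x ^ 2) = Real.sqrt (Real.pi / b) / (2 * b) := by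
  have hderiv : ∀ x : ℝ, HasDerivAt (fun x : ℝ => -(x * Real.exp (-b * x ^ 2)) / (2 * b))
      (x ^ 2 * Real.exp (-b * x ^ 2) - Real.exp (-b * x ^ 2) / (2 * b)) x := by
    intro x
    have h1 : HasDerivAt (fun x : ℝ => -b * x ^ 2) (-b * (2 * x)) x := by
      simpa using ((hasDerivAt_pow 2 x).const_mul (-b))
    have h2 : HasDerivAt (fun x : ℝ => Real.exp (-b * x ^ 2))
        (Real.exp (-b * x ^ 2) * (-b * (2 * x))) x := h1.exp
    have h3 : HasDerivAt (fun x : ℝ => x * Real.exp (-b * x ^ 2))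
        (1 * Real.exp (-b * x ^ 2) + x * (Real.exp (-b * x ^ 2) * (-b * (2 * x)))) x :=
      (hasDerivAt_id x).mul h2
    have h4 : HasDerivAt (fun x : ℝ => -(x * Real.exp (-b * x ^ 2)) / (2 * b))
        (-(1 * Real.exp (-b * x ^ 2) + x * (Real.exp (-b * x ^ 2) * (-b * (2 * x)))) / (2 * b)) x :=
      (h3.neg).div_const (2 * b)
    convert h4 using 1
    field_simp
    ring
  have hint : Integrable (fun x : ℝ =>
      x ^ 2 * Real.exp (-b * x ^ 2) - Real.exp (-b * x ^ 2) / (2 * b)) :=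
    (integrable_sq_mul_exp_neg_sq hb).sub ((integrable_exp_neg_mul_sq hb).div_const _)
  have htop : Tendsto (fun x : ℝ => -(x * Real.exp (-b * x ^ 2)) / (2 * b)) atTop (nhds 0) := by
    have := ((tendsto_mul_exp_neg_sq hb).neg).div_const (2 * b)
    simpa using this
  have hbot : Tendsto (fun x : ℝ => -(x * Real.exp (-b * x ^ 2)) / (2 * b)) atBot (nhds 0) := by
    have hcomp : Tendsto (fun x : ℝ =>
        -((-x) * Real.exp (-b * (-x) ^ 2)) / (2 * b)) atTop (nhds 0) := by
      have := ((tendsto_mul_exp_neg_sq hb).div_const (2 * b))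
      simpa [neg_div] using this.congr (fun x => by ring_nf)
    have h5 := hcomp.comp tendsto_neg_atBot_atTop
    apply h5.congr
    intro x
    simp only [Function.comp_apply, neg_neg]
  have h0 := integral_of_hasDerivAt_of_tendsto hderiv hint hbot htop
  rw [sub_zero] at h0
  have hsplit : ∫ x : ℝ, (x ^ 2 * Real.exp (-b * x ^ 2) - Real.exp (-b * x ^ 2) / (2 * b))
      = (∫ x : ℝ, x ^ 2 * Real.exp (-b * x ^ 2)) - (∫ x : ℝ, Real.exp (-b * x ^ 2)) / (2 * b) := by
    rw [integral_sub (integrable_sq_mul_exp_neg_sq hb) ((integrable_exp_neg_mul_sq hb).div_const _),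
      integral_div]
  rw [hsplit, integral_gaussian] at h0
  linarith

noncomputable def g1 (s m t : ℝ) : ℝ :=
  (2 * Real.pi * s) ^ (-(1:ℝ)/2) * Real.exp (-(t - m)^2 / (2*s))

lemma g1_nonneg {s : ℝ} (hs : 0 < s) (m t : ℝ) : 0 ≤ g1 s m t := by
  unfold g1; positivity

lemma g1_exp_eq {s : ℝ} (hs : 0 < s) (m t : ℝ) :
    Real.exp (-(t - m)^2 / (2*s)) = Real.exp (-(1/(2*s)) * (t - m)^2) := by
  congr 1; field_simp

lemma g1_int {s : ℝ} (hs : 0 < s) (m : ℝ) : Integrable (g1 s m) := by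
  unfold g1
  simp_rw [g1_exp_eq hs m]
  exact ((integrable_exp_neg_mul_sq (by positivity : (0:ℝ) < 1/(2*s))).comp_sub_right m).const_mul _

lemma const_sqrt {s : ℝ} (hs : 0 < s) :
    (2 * Real.pi * s) ^ (-(1:ℝ)/2) * Real.sqrt (2 * Real.pi * s) = 1 := by
  have h : (0:ℝ) < 2 * Real.pi * s := by positivity
  rw [Real.sqrt_eq_rpow, ← Real.rpow_add h]
  norm_num

lemma g1_one {s : ℝ} (hs : 0 < s) (m : ℝ) : ∫ t, g1 s m t = 1 := by
  rw [show (g1 s m) = fun t => (2*Real.pi*s)^(-(1:ℝ)/2) * Real.exp (-(1/(2*s))*(t-m)^2) from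
    funext fun t => by unfold g1; rw [g1_exp_eq hs m]]
  rw [integral_const_mul]
  rw [integral_sub_right_eq_self (μ := volume) (fun u => Real.exp (-(1/(2*s)) * u^2)) m]
  rw [integral_gaussian]
  have : Real.pi / (1/(2*s)) = 2 * Real.pi * s := by field_simp
  rw [this, const_sqrt hs]

lemma g1_sq_int {s : ℝ} (hs : 0 < s) (m : ℝ) :
    Integrable (fun t => g1 s m t * (t - m)^2) := by
  unfold g1
  simp_rw [g1_exp_eq hs m, mul_assoc, mul_comm (Real.exp _)]
  exact (((integrable_sq_mul_exp_neg_sq (by positivity : (0:ℝ) < 1/(2*s))).comp_sub_right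
    m).const_mul _)

lemma g1_sq {s : ℝ} (hs : 0 < s) (m : ℝ) : ∫ t, g1 s m t * (t - m)^2 = s := by
  rw [show (fun t => g1 s m t * (t-m)^2)
      = fun t => (2*Real.pi*s)^(-(1:ℝ)/2) * ((t-m)^2 * Real.exp (-(1/(2*s))*(t-m)^2)) from
    funext fun t => by unfold g1; rw [g1_exp_eq hs m]; ring]
  rw [integral_const_mul]
  rw [integral_sub_right_eq_self (μ := volume)
    (fun u => u^2 * Real.exp (-(1/(2*s)) * u^2)) m]
  rw [integral_sq_mul_exp_neg_sq (by positivity : (0:ℝ) < 1/(2*s))]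
  have h1 : Real.pi / (1/(2*s)) = 2 * Real.pi * s := by field_simp
  rw [h1]
  have h2 : Real.sqrt (2*Real.pi*s) / (2 * (1/(2*s))) = Real.sqrt (2*Real.pi*s) * s := by
    field_simp
  rw [h2, ← mul_assoc, const_sqrt hs, one_mul]

lemma gaussIso_eq_prod {d : ℕ} {s : ℝ} (hs : 0 < s) (μ x : Fin d → ℝ) :
    gaussIso d μ s x = ∏ i, g1 s (μ i) (x i) := by
  unfold gaussIso g1
  rw [Finset.prod_mul_distrib, Finset.prod_const]
  have hc : (2 * Real.pi * s) ^ (-(d : ℝ) / 2)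
      = ((2 * Real.pi * s) ^ (-(1:ℝ)/2)) ^ (Finset.univ (α := Fin d)).card := by
    rw [Finset.card_univ, Fintype.card_fin, ← Real.rpow_natCast ((2*Real.pi*s) ^ (-(1:ℝ)/2)) d,
      ← Real.rpow_mul (by positivity)]
    congr 1
    ring
  rw [hc]
  congr 1
  rw [← Real.exp_sum]
  congr 1
  rw [← Finset.sum_div]
  rw [← Finset.sum_neg_distrib]

lemma gaussIso_nonneg {d : ℕ} {s : ℝ} (hs : 0 < s) (μ x : Fin d → ℝ) :
    0 ≤ gaussIso d μ s x := by
  unfold gaussIso; positivity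

lemma gaussIso_le {d : ℕ} {s : ℝ} (hs : 0 < s) (μ x : Fin d → ℝ) :
    gaussIso d μ s x ≤ (2 * Real.pi * s) ^ (-(d : ℝ) / 2) := by
  unfold gaussIso
  have h1 : Real.exp (-(∑ i, (x i - μ i) ^ 2) / (2 * s)) ≤ 1 := by
    rw [Real.exp_le_one_iff]
    have : 0 ≤ ∑ i, (x i - μ i) ^ 2 := Finset.sum_nonneg fun i _ => sq_nonneg _
    apply div_nonpos_of_nonpos_of_nonneg (by linarith) (by positivity)
  calc (2*Real.pi*s) ^ (-(d:ℝ)/2) * Real.exp (-(∑ i, (x i - μ i) ^ 2) / (2 * s))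
      ≤ (2*Real.pi*s) ^ (-(d:ℝ)/2) * 1 := by
        apply mul_le_mul_of_nonneg_left h1 (by positivity)
    _ = _ := mul_one _

lemma gaussIso_integrable {d : ℕ} {s : ℝ} (hs : 0 < s) (μ : Fin d → ℝ) :
    Integrable (gaussIso d μ s) := by
  have : gaussIso d μ s = fun x => ∏ i, g1 s (μ i) (x i) :=
    funext fun x => gaussIso_eq_prod hs μ x
  rw [this]
  exact Integrable.fintype_prod (𝕜 := ℝ) (fun i => g1_int hs (μ i))

lemma gaussIso_one {d : ℕ} {s : ℝ} (hs : 0 < s) (μ : Fin d → ℝ) :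
    ∫ x, gaussIso d μ s x = 1 := by
  have : gaussIso d μ s = fun x => ∏ i, g1 s (μ i) (x i) :=
    funext fun x => gaussIso_eq_prod hs μ x
  rw [this, integral_fintype_prod_volume_eq_prod (𝕜 := ℝ) (f := fun i t => g1 s (μ i) t)]
  simp [g1_one hs]

noncomputable def gfac (d : ℕ) (s : ℝ) (μ : Fin d → ℝ) (j i : Fin d) (t : ℝ) : ℝ :=
  g1 s (μ i) t * (if i = j then (t - μ i)^2 else 1)

lemma gfac_int {d : ℕ} {s : ℝ} (hs : 0 < s) (μ : Fin d → ℝ) (j i : Fin d) :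
    Integrable (gfac d s μ j i) := by
  unfold gfac
  by_cases hij : i = j
  · simpa [hij] using g1_sq_int hs (μ i)
  · simpa [hij] using g1_int hs (μ i)

lemma gfac_integral {d : ℕ} {s : ℝ} (hs : 0 < s) (μ : Fin d → ℝ) (j i : Fin d) :
    ∫ t, gfac d s μ j i t = if i = j then s else 1 := by
  unfold gfac
  by_cases hij : i = j
  · simpa [hij] using g1_sq hs (μ i)
  · simpa [hij] using g1_one hs (μ i)

lemma gaussIso_sq_eq {d : ℕ} {s : ℝ} (hs : 0 < s) (μ x : Fin d → ℝ) :
    gaussIso d μ s x * ∑ j, (x j - μ j)^2 = ∑ j, ∏ i, gfac d s μ j i (x i) := by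
  rw [gaussIso_eq_prod hs, Finset.mul_sum]
  congr 1
  funext j
  unfold gfac
  rw [Finset.prod_mul_distrib]
  congr 1
  simp

lemma gaussIso_sq_integrable {d : ℕ} {s : ℝ} (hs : 0 < s) (μ : Fin d → ℝ) :
    Integrable (fun x => gaussIso d μ s x * ∑ j, (x j - μ j)^2) := by
  have : (fun x => gaussIso d μ s x * ∑ j, (x j - μ j)^2)
      = fun x => ∑ j, ∏ i, gfac d s μ j i (x i) :=
    funext fun x => gaussIso_sq_eq hs μ x
  rw [this]
  exact integrable_finset_sum _ fun j _ =>
    Integrable.fintype_prod (𝕜 := ℝ) (fun i => gfac_int hs μ j i)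

lemma gaussIso_sq_integral {d : ℕ} {s : ℝ} (hs : 0 < s) (μ : Fin d → ℝ) :
    ∫ x, gaussIso d μ s x * ∑ j, (x j - μ j)^2 = d * s := by
  have h : (fun x => gaussIso d μ s x * ∑ j, (x j - μ j)^2)
      = fun x => ∑ j, ∏ i, gfac d s μ j i (x i) :=
    funext fun x => gaussIso_sq_eq hs μ x
  rw [h, integral_finset_sum (μ := volume) _ fun j _ =>
    Integrable.fintype_prod (𝕜 := ℝ) (fun i => gfac_int hs μ j i)]
  have : ∀ j : Fin d, ∫ x : Fin d → ℝ, ∏ i, gfac d s μ j i (x i) = s := by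
    intro j
    rw [integral_fintype_prod_volume_eq_prod (𝕜 := ℝ) (f := fun i t => gfac d s μ j i t)]
    simp_rw [gfac_integral hs μ j]
    simp
  simp_rw [this]
  simp [mul_comm]

lemma quad_min {d : ℕ} (w : (Fin d → ℝ) → ℝ) (hw0 : ∀ x, 0 ≤ w x)
    (hwi : Integrable w) (hwx : ∀ i, Integrable (fun x => w x * x i))
    (hws : ∀ t : Fin d → ℝ, Integrable (fun x => w x * ∑ i, (x i - t i)^2))
    (t : Fin d → ℝ) :
    ∫ x, w x * ∑ i, (x i - (∫ y, w y * y i) / (∫ y, w y))^2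
      ≤ ∫ x, w x * ∑ i, (x i - t i)^2 := by
  set I0 : ℝ := ∫ y, w y with hI0def
  set m : Fin d → ℝ := fun i => (∫ y, w y * y i) / I0 with hmdef
  by_cases hI0 : I0 = 0
  · have hw_ae : w =ᵐ[volume] 0 := by
      rw [← integral_eq_zero_iff_of_nonneg hw0 hwi]
      exact hI0
    have hz : ∀ u : Fin d → ℝ,
        (fun x => w x * ∑ i, (x i - u i)^2) =ᵐ[volume] 0 := by
      intro u
      filter_upwards [hw_ae] with x hx
      simp [hx]
    rw [integral_congr_ae (hz (fun i => (∫ y, w y * y i) / I0)), integral_congr_ae (hz t)]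
  · have hI0pos : 0 < I0 := lt_of_le_of_ne (integral_nonneg hw0) (Ne.symm hI0)
    have hI1 : ∀ i, ∫ y, w y * y i = m i * I0 := by
      intro i
      rw [hmdef]
      field_simp
    rw [← sub_nonneg]
    have hsub : (∫ x, w x * ∑ i, (x i - t i)^2) - (∫ x, w x * ∑ i, (x i - m i)^2)
        = ∫ x, (w x * ∑ i, (x i - t i)^2 - w x * ∑ i, (x i - m i)^2) :=
      (integral_sub (hws t) (hws m)).symm
    rw [hsub]
    have hpt : ∀ x : Fin d → ℝ, w x * ∑ i, (x i - t i)^2 - w x * ∑ i, (x i - m i)^2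
        = ∑ i, ((2 * (m i - t i)) * (w x * x i) - ((m i - t i) * (t i + m i)) * w x) := by
      intro x
      rw [← mul_sub, ← Finset.sum_sub_distrib, Finset.mul_sum]
      congr 1
      funext i
      ring
    simp_rw [hpt]
    rw [integral_finset_sum (μ := volume) Finset.univ
      (f := fun i x => 2*(m i - t i)*(w x * x i) - (m i - t i)*(t i + m i)*w x)
      (fun i _ => ((hwx i).const_mul _).sub (hwi.const_mul _))]
    apply Finset.sum_nonneg
    intro i _
    rw [integral_sub ((hwx i).const_mul _) (hwi.const_mul _), integral_const_mul,
      integral_const_mul, hI1 i]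
    have : 2 * (m i - t i) * (m i * I0) - (m i - t i) * (t i + m i) * I0
        = I0 * (m i - t i)^2 := by ring
    rw [this]
    positivity

section Setting

variable {d : ℕ} {q0 : (Fin d → ℝ) → ℝ} {K B : ℝ}

/-- local notation for the joint weight -/
noncomputable def Wf (d : ℕ) (q0 : (Fin d → ℝ) → ℝ) (K B : ℝ)
    (x0 xn : Fin d → ℝ) : ℝ :=
  q0 x0 * gaussIso d (fun i => K * x0 i) B xn

lemma Wf_nonneg (hq0 : ∀ v, 0 ≤ q0 v) (hB : 0 < B) (x0 xn : Fin d → ℝ) :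
    0 ≤ Wf d q0 K B x0 xn :=
  mul_nonneg (hq0 x0) (gaussIso_nonneg hB _ _)

lemma gauss_cont (hB : 0 < B) :
    Continuous (fun p : (Fin d → ℝ) × (Fin d → ℝ) =>
      gaussIso d (fun i => K * p.1 i) B p.2) := by
  unfold gaussIso
  apply Continuous.mul continuous_const
  apply Real.continuous_exp.comp
  apply Continuous.div_const
  apply Continuous.neg
  apply continuous_finset_sum
  intro i _
  exact (((continuous_apply i).comp continuous_snd).sub
    (continuous_const.mul ((continuous_apply i).comp continuous_fst))).pow 2

lemma Wf_meas (hq0m : Measurable q0) (hB : 0 < B) :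
    Measurable (fun p : (Fin d → ℝ) × (Fin d → ℝ) => Wf d q0 K B p.1 p.2) :=
  (hq0m.comp measurable_fst).mul (gauss_cont hB).measurable

lemma Wf_meas_left (hq0m : Measurable q0) (hB : 0 < B) (xn : Fin d → ℝ) :
    Measurable (fun x0 => Wf d q0 K B x0 xn) :=
  (Wf_meas hq0m hB).comp (measurable_id.prodMk measurable_const)

lemma Wf_le (hq0 : ∀ v, 0 ≤ q0 v) (hB : 0 < B) (x0 xn : Fin d → ℝ) :
    Wf d q0 K B x0 xn ≤ (2 * Real.pi * B) ^ (-(d : ℝ) / 2) * q0 x0 := by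
  rw [mul_comm ((2 * Real.pi * B) ^ (-(d : ℝ) / 2))]
  exact mul_le_mul_of_nonneg_left (gaussIso_le hB _ _) (hq0 x0)

lemma q0_integrable (hq0_one : ∫ v, q0 v = (1:ℝ)) : Integrable q0 :=
  integrable_of_integral_eq_one hq0_one

lemma Wf_int_left (hq0 : ∀ v, 0 ≤ q0 v) (hq0m : Measurable q0)
    (hq0_one : ∫ v, q0 v = (1:ℝ)) (hB : 0 < B) (xn : Fin d → ℝ) :
    Integrable (fun x0 => Wf d q0 K B x0 xn) := by
  apply Integrable.mono' (((q0_integrable hq0_one)).const_mul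
    ((2 * Real.pi * B) ^ (-(d : ℝ) / 2)))
    (Wf_meas_left hq0m hB xn).aestronglyMeasurable
  filter_upwards with x0
  rw [Real.norm_eq_abs, abs_of_nonneg (Wf_nonneg hq0 hB x0 xn)]
  exact Wf_le hq0 hB x0 xn

lemma Wf_mul_xi_int_left (hq0 : ∀ v, 0 ≤ q0 v) (hq0m : Measurable q0)
    (hq0_one : ∫ v, q0 v = (1:ℝ))
    (hq0_mom2 : Integrable (fun v => q0 v * ∑ i, (v i) ^ 2)) (hB : 0 < B)
    (xn : Fin d → ℝ) (i : Fin d) :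
    Integrable (fun x0 => Wf d q0 K B x0 xn * x0 i) := by
  set C := (2 * Real.pi * B) ^ (-(d : ℝ) / 2) with hC
  have hC0 : 0 ≤ C := by rw [hC]; positivity
  have hg : Integrable (fun x0 => C * q0 x0 + C * (q0 x0 * ∑ j, (x0 j)^2)) :=
    ((q0_integrable hq0_one).const_mul C).add (hq0_mom2.const_mul C)
  apply Integrable.mono' hg
    (((Wf_meas_left hq0m hB xn).mul (measurable_pi_apply i)).aestronglyMeasurable)
  filter_upwards with x0
  simp only [Pi.mul_apply]
  rw [Real.norm_eq_abs, abs_mul, abs_of_nonneg (Wf_nonneg hq0 hB x0 xn)]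
  have h1 : |x0 i| ≤ 1 + ∑ j, (x0 j)^2 := by
    have h2 : (x0 i)^2 ≤ ∑ j, (x0 j)^2 :=
      Finset.single_le_sum (fun j _ => sq_nonneg (x0 j)) (Finset.mem_univ i)
    nlinarith [abs_nonneg (x0 i), sq_abs (x0 i)]
  calc Wf d q0 K B x0 xn * |x0 i| ≤ (C * q0 x0) * (1 + ∑ j, (x0 j)^2) :=
        mul_le_mul (Wf_le hq0 hB x0 xn) h1 (abs_nonneg _)
          (mul_nonneg hC0 (hq0 x0))
    _ = C * q0 x0 + C * (q0 x0 * ∑ j, (x0 j)^2) := by ring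

lemma Wf_sq_int_left (hq0 : ∀ v, 0 ≤ q0 v) (hq0m : Measurable q0)
    (hq0_one : ∫ v, q0 v = (1:ℝ))
    (hq0_mom2 : Integrable (fun v => q0 v * ∑ i, (v i) ^ 2)) (hB : 0 < B)
    (xn : Fin d → ℝ) (t : Fin d → ℝ) :
    Integrable (fun x0 => Wf d q0 K B x0 xn * ∑ i, (x0 i - t i)^2) := by
  set C := (2 * Real.pi * B) ^ (-(d : ℝ) / 2) with hC
  have hC0 : 0 ≤ C := by rw [hC]; positivity
  set T := ∑ i, (t i)^2 with hT
  have hT0 : 0 ≤ T := Finset.sum_nonneg fun i _ => sq_nonneg _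
  have hg : Integrable (fun x0 => (2*C) * (q0 x0 * ∑ j, (x0 j)^2) + (2*C*T) * q0 x0) :=
    (hq0_mom2.const_mul _).add ((q0_integrable hq0_one).const_mul _)
  have hmeas : Measurable (fun x0 : Fin d → ℝ => ∑ i, (x0 i - t i)^2) := by
    apply Finset.measurable_sum
    intro i _
    exact ((measurable_pi_apply i).sub measurable_const).pow measurable_const
  apply Integrable.mono' hg ((Wf_meas_left hq0m hB xn).mul hmeas).aestronglyMeasurable
  filter_upwards with x0
  have hS0 : (0:ℝ) ≤ ∑ i, (x0 i - t i)^2 := Finset.sum_nonneg fun i _ => sq_nonneg _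
  simp only [Pi.mul_apply]
  rw [Real.norm_eq_abs, abs_mul, abs_of_nonneg (Wf_nonneg hq0 hB x0 xn), abs_of_nonneg hS0]
  have h1 : ∑ i, (x0 i - t i)^2 ≤ 2 * ∑ j, (x0 j)^2 + 2 * T := by
    rw [hT, Finset.mul_sum, Finset.mul_sum, ← Finset.sum_add_distrib]
    apply Finset.sum_le_sum
    intro i _
    nlinarith [sq_nonneg (x0 i + t i)]
  calc Wf d q0 K B x0 xn * ∑ i, (x0 i - t i)^2
      ≤ (C * q0 x0) * (2 * ∑ j, (x0 j)^2 + 2*T) :=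
        mul_le_mul (Wf_le hq0 hB x0 xn) h1 hS0 (mul_nonneg hC0 (hq0 x0))
    _ = (2*C) * (q0 x0 * ∑ j, (x0 j)^2) + (2*C*T) * q0 x0 := by ring

end Setting

section ProdFacts

variable {d : ℕ}

lemma prod_facts (f : (Fin d → ℝ) × (Fin d → ℝ) → ℝ) (g : (Fin d → ℝ) → ℝ)
    (hf_meas : Measurable f) (hf_nn : ∀ p, 0 ≤ f p)
    (hg_int : Integrable g) (hg_nn : ∀ x, 0 ≤ g x)
    (hinner_int : ∀ x, Integrable (fun y => f (x, y)))
    (hinner : ∀ x, ∫ y, f (x, y) = g x) :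
    Integrable f (volume.prod volume) ∧
      ∫ p, f p ∂(volume.prod volume) = ∫ x, g x := by
  have hfin : ∫⁻ p, ENNReal.ofReal (f p) ∂(volume.prod volume)
      = ENNReal.ofReal (∫ x, g x) := by
    rw [MeasureTheory.lintegral_prod _ hf_meas.ennreal_ofReal.aemeasurable]
    have h1 : ∀ x, ∫⁻ y, ENNReal.ofReal (f (x, y)) = ENNReal.ofReal (g x) := fun x => by
      rw [← ofReal_integral_eq_lintegral_ofReal (hinner_int x)
        (Filter.Eventually.of_forall fun y => hf_nn _), hinner x]
    simp_rw [h1]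
    rw [← ofReal_integral_eq_lintegral_ofReal hg_int (Filter.Eventually.of_forall hg_nn)]
  have hint : Integrable f (volume.prod volume) := by
    refine ⟨hf_meas.aestronglyMeasurable, ?_⟩
    rw [hasFiniteIntegral_iff_ofReal (Filter.Eventually.of_forall hf_nn), hfin]
    exact ENNReal.ofReal_lt_top
  refine ⟨hint, ?_⟩
  rw [MeasureTheory.integral_prod f hint]
  simp_rw [hinner]

end ProdFacts


section Apps
variable {d : ℕ} {q0 : (Fin d → ℝ) → ℝ} {K B : ℝ}

set_option maxHeartbeats 1000000 in
lemma app1 (hq0 : ∀ v, 0 ≤ q0 v) (hq0m : Measurable q0)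
    (hq0_one : ∫ v, q0 v = (1:ℝ)) (hB : 0 < B) :
    Integrable (fun p : (Fin d → ℝ) × (Fin d → ℝ) => Wf d q0 K B p.1 p.2)
        (volume.prod volume) ∧
      ∫ p : (Fin d → ℝ) × (Fin d → ℝ), Wf d q0 K B p.1 p.2 ∂(volume.prod volume) = 1 := by
  have hinner_int : ∀ x0 : Fin d → ℝ, Integrable (fun y => Wf d q0 K B x0 y) := by
    intro x0
    unfold Wf
    exact (gaussIso_integrable hB _).const_mul (q0 x0)
  have hinner : ∀ x0 : Fin d → ℝ, ∫ y, Wf d q0 K B x0 y = q0 x0 := by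
    intro x0
    unfold Wf
    rw [integral_const_mul, gaussIso_one hB, mul_one]
  have h := prod_facts (fun p => Wf d q0 K B p.1 p.2) q0 (Wf_meas hq0m hB)
    (fun p => Wf_nonneg hq0 hB p.1 p.2) (q0_integrable hq0_one) hq0
    hinner_int hinner
  exact ⟨h.1, by rw [h.2, hq0_one]⟩

set_option maxHeartbeats 1000000 in
lemma margN_facts (hq0 : ∀ v, 0 ≤ q0 v) (hq0m : Measurable q0)
    (hq0_one : ∫ v, q0 v = (1:ℝ)) (hB : 0 < B) :
    Integrable (fun xn => ∫ x0, Wf d q0 K B x0 xn) ∧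
      ∫ xn, (∫ x0, Wf d q0 K B x0 xn) = 1 := by
  have h := app1 (K := K) hq0 hq0m hq0_one hB
  have h2 := h.1.integral_prod_right
  refine ⟨h2, ?_⟩
  rw [← MeasureTheory.integral_prod_symm _ h.1, h.2]

lemma f2_eq (hK : 0 < K) (x0 xn : Fin d → ℝ) :
    Wf d q0 K B x0 xn * ∑ i, (x0 i - xn i / K)^2
      = (q0 x0 / K^2) * (gaussIso d (fun i => K * x0 i) B xn
          * ∑ i, (xn i - K * x0 i)^2) := by
  unfold Wf
  have h : ∑ i, (x0 i - xn i / K)^2 = (∑ i, (xn i - K * x0 i)^2) / K^2 := by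
    rw [Finset.sum_div]
    congr 1
    funext i
    field_simp
    ring
  rw [h]
  ring

set_option maxHeartbeats 1000000 in
lemma app2 (hq0 : ∀ v, 0 ≤ q0 v) (hq0m : Measurable q0)
    (hq0_one : ∫ v, q0 v = (1:ℝ)) (hB : 0 < B) (hK : 0 < K) :
    Integrable (fun p : (Fin d → ℝ) × (Fin d → ℝ) =>
        Wf d q0 K B p.1 p.2 * ∑ i, (p.1 i - p.2 i / K)^2) (volume.prod volume) ∧
      ∫ p : (Fin d → ℝ) × (Fin d → ℝ),
          Wf d q0 K B p.1 p.2 * ∑ i, (p.1 i - p.2 i / K)^2 ∂(volume.prod volume)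
        = d * B / K^2 := by
  have hmeas : Measurable (fun p : (Fin d → ℝ) × (Fin d → ℝ) =>
      Wf d q0 K B p.1 p.2 * ∑ i, (p.1 i - p.2 i / K)^2) := by
    apply (Wf_meas hq0m hB).mul
    exact (continuous_finset_sum Finset.univ
      (f := fun (i : Fin d) (p : (Fin d → ℝ) × (Fin d → ℝ)) => (p.1 i - p.2 i / K)^2)
      (fun i _ => by fun_prop)).measurable
  have hnn : ∀ p : (Fin d → ℝ) × (Fin d → ℝ),
      0 ≤ Wf d q0 K B p.1 p.2 * ∑ i, (p.1 i - p.2 i / K)^2 := fun p =>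
    mul_nonneg (Wf_nonneg hq0 hB _ _) (Finset.sum_nonneg fun i _ => sq_nonneg _)
  have hinner_int : ∀ x0 : Fin d → ℝ,
      Integrable (fun y => Wf d q0 K B x0 y * ∑ i, (x0 i - y i / K)^2) := by
    intro x0
    simp only [f2_eq hK]
    exact ((gaussIso_sq_integrable hB _).const_mul _)
  have hinner : ∀ x0 : Fin d → ℝ,
      ∫ y, Wf d q0 K B x0 y * ∑ i, (x0 i - y i / K)^2 = q0 x0 * (d * B / K^2) := by
    intro x0
    simp only [f2_eq hK]
    rw [integral_const_mul, gaussIso_sq_integral hB]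
    ring
  have h := prod_facts _ (fun x0 => q0 x0 * (d * B / K^2)) hmeas hnn
    ((q0_integrable hq0_one).mul_const _)
    (fun x0 => mul_nonneg (hq0 x0) (by positivity)) hinner_int hinner
  refine ⟨h.1, ?_⟩
  rw [h.2, integral_mul_const, hq0_one, one_mul]

end Apps

section Bounds
variable {d : ℕ} {q0 : (Fin d → ℝ) → ℝ} {K B : ℝ}

set_option maxHeartbeats 1000000 in
lemma Etr_le_main (hq0 : ∀ v, 0 ≤ q0 v) (hq0m : Measurable q0)
    (hq0_one : ∫ v, q0 v = (1:ℝ))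
    (hq0_mom2 : Integrable (fun v => q0 v * ∑ i, (v i) ^ 2)) (hB : 0 < B) (hK : 0 < K) :
    ∫ xn, (∫ x0, Wf d q0 K B x0 xn *
        ∑ i, (x0 i - (∫ y, Wf d q0 K B y xn * y i) / (∫ y, Wf d q0 K B y xn))^2)
      ≤ d * B / K^2 := by
  have happ2 := app2 (d := d) (q0 := q0) hq0 hq0m hq0_one hB hK
  have hG_int : Integrable (fun xn => ∫ x0, Wf d q0 K B x0 xn * ∑ i, (x0 i - xn i / K)^2) :=
    happ2.1.integral_prod_right
  have hF_nonneg : ∀ xn : Fin d → ℝ, 0 ≤ ∫ x0, Wf d q0 K B x0 xn *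
      ∑ i, (x0 i - (∫ y, Wf d q0 K B y xn * y i) / (∫ y, Wf d q0 K B y xn))^2 :=
    fun xn => integral_nonneg fun x0 => mul_nonneg (Wf_nonneg hq0 hB _ _)
      (Finset.sum_nonneg fun i _ => sq_nonneg _)
  have hFG : ∀ xn : Fin d → ℝ,
      (∫ x0, Wf d q0 K B x0 xn *
        ∑ i, (x0 i - (∫ y, Wf d q0 K B y xn * y i) / (∫ y, Wf d q0 K B y xn))^2)
      ≤ ∫ x0, Wf d q0 K B x0 xn * ∑ i, (x0 i - xn i / K)^2 := by
    intro xn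
    exact quad_min (fun x0 => Wf d q0 K B x0 xn) (fun x0 => Wf_nonneg hq0 hB x0 xn)
      (Wf_int_left hq0 hq0m hq0_one hB xn)
      (fun i => Wf_mul_xi_int_left hq0 hq0m hq0_one hq0_mom2 hB xn i)
      (fun t => Wf_sq_int_left hq0 hq0m hq0_one hq0_mom2 hB xn t)
      (fun i => xn i / K)
  calc ∫ xn, (∫ x0, Wf d q0 K B x0 xn *
        ∑ i, (x0 i - (∫ y, Wf d q0 K B y xn * y i) / (∫ y, Wf d q0 K B y xn))^2)
      ≤ ∫ xn, (∫ x0, Wf d q0 K B x0 xn * ∑ i, (x0 i - xn i / K)^2) :=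
        integral_mono_of_nonneg (Filter.Eventually.of_forall hF_nonneg) hG_int
          (Filter.Eventually.of_forall hFG)
    _ = d * B / K^2 := by
        rw [← MeasureTheory.integral_prod_symm _ happ2.1, happ2.2]

set_option maxHeartbeats 1000000 in
lemma Etr_le_support (hq0 : ∀ v, 0 ≤ q0 v) (hq0m : Measurable q0)
    (hq0_one : ∫ v, q0 v = (1:ℝ))
    (hq0_mom2 : Integrable (fun v => q0 v * ∑ i, (v i) ^ 2)) (hB : 0 < B)
    (a b : ℝ) (hsupp : ∀ v, q0 v ≠ 0 → ∀ i, v i ∈ Set.Icc a b) :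
    ∫ xn, (∫ x0, Wf d q0 K B x0 xn *
        ∑ i, (x0 i - (∫ y, Wf d q0 K B y xn * y i) / (∫ y, Wf d q0 K B y xn))^2)
      ≤ d * ((b - a)/2)^2 := by
  set c0 : ℝ := (a + b)/2 with hc0
  set r : ℝ := (b - a)/2 with hr
  have hmarg := margN_facts (d := d) (q0 := q0) (K := K) hq0 hq0m hq0_one hB
  have hF_nonneg : ∀ xn : Fin d → ℝ, 0 ≤ ∫ x0, Wf d q0 K B x0 xn *
      ∑ i, (x0 i - (∫ y, Wf d q0 K B y xn * y i) / (∫ y, Wf d q0 K B y xn))^2 :=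
    fun xn => integral_nonneg fun x0 => mul_nonneg (Wf_nonneg hq0 hB _ _)
      (Finset.sum_nonneg fun i _ => sq_nonneg _)
  have hpt : ∀ xn x0 : Fin d → ℝ, Wf d q0 K B x0 xn * ∑ i, (x0 i - c0)^2
      ≤ Wf d q0 K B x0 xn * (d * r^2) := by
    intro xn x0
    by_cases hq : q0 x0 = 0
    · have : Wf d q0 K B x0 xn = 0 := by unfold Wf; rw [hq, zero_mul]
      rw [this, zero_mul, zero_mul]
    · apply mul_le_mul_of_nonneg_left _ (Wf_nonneg hq0 hB x0 xn)
      have hsum : ∑ i, (x0 i - c0)^2 ≤ ∑ _i : Fin d, r^2 := by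
        apply Finset.sum_le_sum
        intro i _
        have h1 := (hsupp x0 hq i).1
        have h2 := (hsupp x0 hq i).2
        rw [hc0, hr]
        nlinarith
      calc ∑ i, (x0 i - c0)^2 ≤ ∑ _i : Fin d, r^2 := hsum
        _ = d * r^2 := by rw [Finset.sum_const, Finset.card_univ, Fintype.card_fin,
            nsmul_eq_mul]
  have hFH : ∀ xn : Fin d → ℝ,
      (∫ x0, Wf d q0 K B x0 xn *
        ∑ i, (x0 i - (∫ y, Wf d q0 K B y xn * y i) / (∫ y, Wf d q0 K B y xn))^2)
      ≤ (d * r^2) * ∫ x0, Wf d q0 K B x0 xn := by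
    intro xn
    have step1 := quad_min (fun x0 => Wf d q0 K B x0 xn) (fun x0 => Wf_nonneg hq0 hB x0 xn)
      (Wf_int_left hq0 hq0m hq0_one hB xn)
      (fun i => Wf_mul_xi_int_left hq0 hq0m hq0_one hq0_mom2 hB xn i)
      (fun t => Wf_sq_int_left hq0 hq0m hq0_one hq0_mom2 hB xn t)
      (fun _ => c0)
    have step2 : (∫ x0, Wf d q0 K B x0 xn * ∑ i, (x0 i - c0)^2)
        ≤ ∫ x0, Wf d q0 K B x0 xn * (d * r^2) := by
      apply integral_mono_of_nonneg
      · exact Filter.Eventually.of_forall fun x0 => mul_nonneg (Wf_nonneg hq0 hB _ _)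
          (Finset.sum_nonneg fun i _ => sq_nonneg _)
      · exact (Wf_int_left hq0 hq0m hq0_one hB xn).mul_const _
      · exact Filter.Eventually.of_forall (hpt xn)
    have step3 : (∫ x0, Wf d q0 K B x0 xn * (d * r^2))
        = (d * r^2) * ∫ x0, Wf d q0 K B x0 xn := by
      rw [integral_mul_const]
      ring
    calc _ ≤ ∫ x0, Wf d q0 K B x0 xn * ∑ i, (x0 i - c0)^2 := step1
      _ ≤ ∫ x0, Wf d q0 K B x0 xn * (d * r^2) := step2
      _ = _ := step3
  calc ∫ xn, (∫ x0, Wf d q0 K B x0 xn *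
        ∑ i, (x0 i - (∫ y, Wf d q0 K B y xn * y i) / (∫ y, Wf d q0 K B y xn))^2)
      ≤ ∫ xn, (d * r^2) * (∫ x0, Wf d q0 K B x0 xn) :=
        integral_mono_of_nonneg (Filter.Eventually.of_forall hF_nonneg)
          (hmarg.1.const_mul _) (Filter.Eventually.of_forall hFH)
    _ = d * r^2 := by rw [integral_const_mul, hmarg.2, mul_one]

lemma Etr_nonneg (hq0 : ∀ v, 0 ≤ q0 v) (hB : 0 < B) :
    0 ≤ ∫ xn, (∫ x0, Wf d q0 K B x0 xn *
        ∑ i, (x0 i - (∫ y, Wf d q0 K B y xn * y i) / (∫ y, Wf d q0 K B y xn))^2) :=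
  integral_nonneg fun xn => integral_nonneg fun x0 => mul_nonneg (Wf_nonneg hq0 hB _ _)
    (Finset.sum_nonneg fun i _ => sq_nonneg _)

end Bounds

set_option maxHeartbeats 1000000 in
/-- bounds of the optimal reverse variance: for the generalized forward
process, `λₙ² ≤ σₙ*² ≤ λₙ² + (√(β̄ₙ/αₙ) − √(β̄_{n−1} − λₙ²))²`; if moreover the data
distribution `q(x₀)` is supported in `[a,b]^d`, then also
`σₙ*² ≤ λₙ² + (√ᾱ_{n−1} − √(β̄_{n−1} − λₙ²)·√(ᾱₙ/β̄ₙ))² ((b−a)/2)²`. -/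
theorem stmt_14 {d N : ℕ} (hd : 0 < d) (hN : 1 ≤ N) (β lam : ℕ → ℝ)
    (hβ : ∀ n ∈ Finset.Icc 1 N, β n ∈ Set.Ioo (0 : ℝ) 1)
    (hlam_nonneg : ∀ n ∈ Finset.Icc 1 N, 0 ≤ lam n)
    (hlam_le : ∀ n ∈ Finset.Icc 1 N, lam n ^ 2 ≤ betaBar β (n - 1))
    (q0 : (Fin d → ℝ) → ℝ)
    (hq0_nonneg : ∀ v, 0 ≤ q0 v) (hq0_meas : Measurable q0) (hq0_one : ∫ v, q0 v = 1)
    (hq0_mom2 : Integrable (fun v => q0 v * ∑ i, (v i) ^ 2)) :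
    ∀ n ∈ Finset.Icc 1 N,
      (lam n ^ 2 ≤ sigmaStar2 d β lam q0 n) ∧
      (sigmaStar2 d β lam q0 n ≤ lam n ^ 2 +
        (Real.sqrt (betaBar β n / (1 - β n)) -
            Real.sqrt (betaBar β (n - 1) - lam n ^ 2)) ^ 2) ∧
      (∀ a b : ℝ, (∀ v, q0 v ≠ 0 → ∀ i, v i ∈ Set.Icc a b) →
        sigmaStar2 d β lam q0 n ≤ lam n ^ 2 +
          (Real.sqrt (alphaBar β (n - 1)) -
              Real.sqrt (betaBar β (n - 1) - lam n ^ 2) *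
                Real.sqrt (alphaBar β n / betaBar β n)) ^ 2 * ((b - a) / 2) ^ 2) := by
  intro n hn
  obtain ⟨hn1, hnN⟩ := Finset.mem_Icc.mp hn
  have hβn := hβ n hn
  -- basic positivity facts
  have hsub : ∀ m, m ≤ n → ∀ i ∈ Finset.Icc 1 m, (0:ℝ) < 1 - β i ∧ 1 - β i ≤ 1 := by
    intro m hm i hi
    obtain ⟨h1, h2⟩ := Finset.mem_Icc.mp hi
    have : i ∈ Finset.Icc 1 N := Finset.mem_Icc.mpr ⟨h1, le_trans (le_trans h2 hm) hnN⟩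
    have hβi := hβ i this
    constructor <;> [linarith [hβi.2]; linarith [hβi.1]]
  have hA_pos : 0 < alphaBar β n :=
    Finset.prod_pos fun i hi => (hsub n le_rfl i hi).1
  have hAp_pos : 0 < alphaBar β (n-1) :=
    Finset.prod_pos fun i hi => (hsub (n-1) (Nat.sub_le n 1) i hi).1
  have hAp_le1 : alphaBar β (n-1) ≤ 1 :=
    Finset.prod_le_one (fun i hi => (hsub (n-1) (Nat.sub_le n 1) i hi).1.le)
      (fun i hi => (hsub (n-1) (Nat.sub_le n 1) i hi).2)
  have hA_eq : alphaBar β n = alphaBar β (n-1) * (1 - β n) := by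
    unfold alphaBar
    have h1 : n = (n - 1) + 1 := (Nat.succ_pred_eq_of_pos hn1).symm
    rw [h1]
    rw [Finset.prod_Icc_succ_top (Nat.le_add_left 1 (n-1))]
    rw [← h1]
  have hA_lt1 : alphaBar β n < 1 := by
    rw [hA_eq]
    calc alphaBar β (n-1) * (1 - β n) ≤ 1 * (1 - β n) :=
          mul_le_mul_of_nonneg_right hAp_le1 (by linarith [hβn.2])
      _ = 1 - β n := one_mul _
      _ < 1 := by linarith [hβn.1]
  have hB_pos : 0 < betaBar β n := by unfold betaBar; linarith
  set A := alphaBar β n with hA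
  set Ap := alphaBar β (n-1) with hAp
  set B := betaBar β n with hB
  set Bp := betaBar β (n-1) with hBp
  set K := Real.sqrt A with hK
  have hK_pos : 0 < K := Real.sqrt_pos.mpr hA_pos
  have hK2 : K^2 = A := Real.sq_sqrt hA_pos.le
  set c : ℝ := Real.sqrt Ap - Real.sqrt (Bp - lam n ^ 2) * Real.sqrt (A / B) with hc
  -- identification of EtrCov with the Wf-form
  have hE_eq : EtrCov d β q0 n = ∫ xn, (∫ x0, Wf d q0 K B x0 xn *
      ∑ i, (x0 i - (∫ y, Wf d q0 K B y xn * y i) / (∫ y, Wf d q0 K B y xn))^2) := rfl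
  set E := EtrCov d β q0 n with hE
  have hE_nonneg : 0 ≤ E := by
    rw [hE_eq]
    exact Etr_nonneg hq0_nonneg hB_pos
  have hE_main : E ≤ d * B / K^2 := by
    rw [hE_eq]
    exact Etr_le_main hq0_nonneg hq0_meas hq0_one hq0_mom2 hB_pos hK_pos
  have hσ : sigmaStar2 d β lam q0 n = lam n ^ 2 + c^2 * (E / d) := rfl
  have hd' : (0:ℝ) < d := Nat.cast_pos.mpr hd
  refine ⟨?_, ?_, ?_⟩
  · -- lower bound
    rw [hσ]
    have : 0 ≤ c^2 * (E / d) :=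
      mul_nonneg (sq_nonneg c) (div_nonneg hE_nonneg hd'.le)
    linarith
  · -- first upper bound
    rw [hσ]
    have hEd : E / d ≤ B / A := by
      rw [div_le_iff₀ hd']
      rw [hK2] at hE_main
      calc E ≤ d * B / A := hE_main
        _ = B / A * d := by ring
    have hkey : c * Real.sqrt (B / A) = Real.sqrt (B / (1 - β n)) - Real.sqrt (Bp - lam n ^ 2) := by
      rw [hc, sub_mul, mul_assoc]
      congr 1
      · rw [← Real.sqrt_mul hAp_pos.le]
        congr 1
        rw [hA_eq]
        have h2 : (1:ℝ) - β n ≠ 0 := by linarith [hβn.2]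
        field_simp
      · rw [← Real.sqrt_mul (div_nonneg hA_pos.le hB_pos.le),
          show A / B * (B / A) = 1 by field_simp, Real.sqrt_one, mul_one]
    have h2 : c^2 * (E / d) ≤ c^2 * (B / A) :=
      mul_le_mul_of_nonneg_left hEd (sq_nonneg c)
    have h3 : c^2 * (B / A) = (Real.sqrt (B / (1 - β n)) - Real.sqrt (Bp - lam n ^ 2))^2 := by
      rw [← hkey, mul_pow, Real.sq_sqrt (div_nonneg hB_pos.le hA_pos.le)]
    linarith
  · -- second upper bound
    intro a b hsupp
    rw [hσ]
    have hE_supp : E ≤ d * ((b - a)/2)^2 := by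
      rw [hE_eq]
      exact Etr_le_support hq0_nonneg hq0_meas hq0_one hq0_mom2 hB_pos a b hsupp
    have hEd : E / d ≤ ((b - a)/2)^2 := by
      rw [div_le_iff₀ hd']
      calc E ≤ d * ((b-a)/2)^2 := hE_supp
        _ = ((b-a)/2)^2 * d := by ring
    have h2 : c^2 * (E / d) ≤ c^2 * ((b - a)/2)^2 :=
      mul_le_mul_of_nonneg_left hEd (sq_nonneg c)
    linarith
end
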